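/- arXiv:1512.04515 — 2 statements merged into one kernel-verified Lean document; each statement's English description precedes it below -/
import Mathlib

section
/- Let w₁, w₂ > 0 and C > 0, and suppose C is a power of 2 times itself expressible as products ℓ·r where ℓ, r range over powers of 2 with ℓ·r = C. Then there exist powers of two ℓ, r with ℓ·r = C such that w₁/r + w₂/ℓ ≤ 2 · min over all positive reals ℓ', r' with ℓ'·r' = C of (w₁/r' + w₂/ℓ'), i.e., the restriction to powers of two loses at most a factor of 2. -/
/-- Restricting `ℓ, r` to powers of two with `ℓ·r = C` (where `C` is a power of two)
loses at most a factor of `2` over the unconstrained minimum of `w₁/r + w₂/ℓ`. -/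
theorem powers_of_two_lose_factor_two (n : ℤ) (w₁ w₂ : ℝ) (hw₁ : 0 < w₁) (hw₂ : 0 < w₂) :
    ∃ a b : ℤ, (2 : ℝ) ^ a * (2 : ℝ) ^ b = (2 : ℝ) ^ n ∧
      ∀ ℓ' r' : ℝ, 0 < ℓ' → 0 < r' → ℓ' * r' = (2 : ℝ) ^ n →
        w₁ / (2 : ℝ) ^ b + w₂ / (2 : ℝ) ^ a ≤ 2 * (w₁ / r' + w₂ / ℓ') := by
  have h2 : (0:ℝ) < 2 := two_pos
  have hC : (0:ℝ) < (2:ℝ)^n := zpow_pos h2 n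
  set P : ℝ := w₁ * w₂ / (2:ℝ)^n with hP
  have hPpos : 0 < P := div_pos (mul_pos hw₁ hw₂) hC
  set s : ℝ := Real.sqrt P with hs
  have hspos : 0 < s := Real.sqrt_pos.mpr hPpos
  have hs2 : s * s = P := Real.mul_self_sqrt hPpos.le
  set a : ℤ := ⌊Real.logb 2 (w₂ / s)⌋ with ha
  have hpa : (0:ℝ) < (2:ℝ)^a := zpow_pos h2 a
  have hpb : (0:ℝ) < (2:ℝ)^(n - a) := zpow_pos h2 (n - a)
  have hx : (0:ℝ) < w₂ / s := div_pos hw₂ hspos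
  have h1 : (2:ℝ)^a ≤ w₂ / s := by
    calc (2:ℝ)^a = (2:ℝ)^((a:ℝ)) := by rw [Real.rpow_intCast]
    _ ≤ (2:ℝ)^(Real.logb 2 (w₂/s)) :=
        Real.rpow_le_rpow_of_exponent_le one_le_two (Int.floor_le _)
    _ = w₂ / s := Real.rpow_logb h2 (by norm_num) hx
  have h2' : w₂ / s ≤ 2 * (2:ℝ)^a := by
    have hlt : w₂ / s < (2:ℝ)^((a:ℝ)+1) := by
      calc w₂/s = (2:ℝ)^(Real.logb 2 (w₂/s)) := (Real.rpow_logb h2 (by norm_num) hx).symm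
      _ < (2:ℝ)^((a:ℝ)+1) :=
          Real.rpow_lt_rpow_of_exponent_lt one_lt_two (by
            have := Int.lt_floor_add_one (Real.logb 2 (w₂/s)); push_cast; rw [ha]; push_cast; linarith)
    have : (2:ℝ)^((a:ℝ)+1) = 2 * (2:ℝ)^a := by
      rw [Real.rpow_add h2, Real.rpow_one, Real.rpow_intCast]; ring
    linarith [hlt.le, this.le]
  refine ⟨a, n - a, ?_, ?_⟩
  · rw [← zpow_add₀ (by norm_num : (2:ℝ) ≠ 0)]; ring_nf
  intro ℓ' r' hℓ hr hC'
  -- bound w₂ / 2^a ≤ 2 s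
  have hb1 : w₂ / (2:ℝ)^a ≤ 2 * s := by
    rw [div_le_iff₀ hpa]
    have := (div_le_iff₀ hspos).mp h2'
    nlinarith
  -- bound w₁ / 2^(n-a) ≤ s
  have hb2 : w₁ / (2:ℝ)^(n - a) ≤ s := by
    have hsplit : (2:ℝ)^(n - a) = (2:ℝ)^n / (2:ℝ)^a := by
      rw [zpow_sub₀ (by norm_num : (2:ℝ) ≠ 0)]
    rw [hsplit, div_le_iff₀ (div_pos hC hpa)]
    have h1' : (2:ℝ)^a * s ≤ w₂ := (le_div_iff₀ hspos).mp h1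
    have hA : w₁ * ((2:ℝ)^a * s) ≤ w₁ * w₂ := mul_le_mul_of_nonneg_left h1' hw₁.le
    have hB : s * s * (2:ℝ)^n = w₁ * w₂ := by rw [hs2, hP]; field_simp
    rw [← mul_div_assoc, le_div_iff₀ hpa]
    nlinarith [hA, hB, hspos, mul_pos hpa hspos]
  -- AM-GM: 2 s ≤ w₁/r' + w₂/ℓ'
  have hxy : (w₁ / r') * (w₂ / ℓ') = s * s := by
    rw [hs2, hP, div_mul_div_comm, ← hC']
    field_simp
  have hX : 0 < w₁ / r' := div_pos hw₁ hr
  have hY : 0 < w₂ / ℓ' := div_pos hw₂ hℓ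
  have hamgm : 2 * s ≤ w₁ / r' + w₂ / ℓ' := by
    nlinarith [sq_nonneg (w₁ / r' - s), hX, hspos]
  linarith
end

section
/- Suppose for each pair with d_{u,v} ≥ ε·d or d'_{u,v} ≠ 0 we have |d_{u,v} − d'_{u,v}| ≤ √(ε·w(u)·w(v))/4 + ε·d/2⁹, d'_{u,v} = 0 whenever d_{u,v} < ε·d and the pair was filtered, the number of pairs with d_{u,v} ≥ ε·d or d'_{u,v} ≠ 0 is at most 4/ε, and Σ_{u,v with d_{u,v}<εd and d'_{u,v}=0} d_{u,v}² ≤ ε·d²/2. Then Σ_{u,v} (d_{u,v} − d'_{u,v})² ≤ ((2¹³+2¹²+1)/2¹⁴)·ε·d² and in particular ≤ 0.752·ε·d². -/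
/-- Bounding the total squared error of the sparse recovery matrix `D'`: under the stated
per-pair error bounds, cardinality bound, and small-entry bound, we get
`Σ (d − d')² ≤ ((2¹³+2¹²+1)/2¹⁴)·ε·d² ≤ 0.752·ε·d²`. -/
theorem sparse_recovery_error_bound {σ : Type*} [Fintype σ] (d d' : σ × σ → ℝ)
    (hd : ∀ q, 0 ≤ d q) (hd' : ∀ q, 0 ≤ d' q) (ε : ℝ) (hε : 0 < ε)
    (hbound : ∀ q : σ × σ, (ε * (∑ r, d r) ≤ d q ∨ d' q ≠ 0) →
      |d q - d' q| ≤ Real.sqrt (ε * (∑ v', d (q.1, v')) * (∑ u', d (u', q.2))) / 4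
        + ε * (∑ r, d r) / 2 ^ 9)
    (hcard : ((Finset.univ.filter
        (fun q : σ × σ => ε * (∑ r, d r) ≤ d q ∨ d' q ≠ 0)).card : ℝ) ≤ 4 / ε)
    (hsmall : ∑ q ∈ Finset.univ.filter
        (fun q : σ × σ => d q < ε * (∑ r, d r) ∧ d' q = 0), (d q) ^ 2
      ≤ ε * (∑ r, d r) ^ 2 / 2) :
    ∑ q, (d q - d' q) ^ 2 ≤ ((2 ^ 13 + 2 ^ 12 + 1) / 2 ^ 14) * ε * (∑ r, d r) ^ 2 ∧
    ∑ q, (d q - d' q) ^ 2 ≤ 0.752 * ε * (∑ r, d r) ^ 2 := by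
  classical
  set D : ℝ := ∑ r, d r with hDdef
  have hD0 : 0 ≤ D := Finset.sum_nonneg fun r _ => hd r
  set p : σ × σ → Prop := fun q => ε * D ≤ d q ∨ d' q ≠ 0 with hp
  set S : Finset (σ × σ) := Finset.univ.filter p with hSdef
  -- split
  have hsplit : ∑ q, (d q - d' q) ^ 2
      = ∑ q ∈ S, (d q - d' q) ^ 2 + ∑ q ∈ Finset.univ.filter (fun q => ¬ p q), (d q - d' q) ^ 2 :=
    (Finset.sum_filter_add_sum_filter_not _ _ _).symm
  -- complement filter equals hsmall's filter
  have hfilt : Finset.univ.filter (fun q => ¬ p q)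
      = Finset.univ.filter (fun q : σ × σ => d q < ε * D ∧ d' q = 0) := by
    apply Finset.filter_congr
    intro q _
    simp only [hp, not_or, not_le, not_not, eq_iff_iff]
  have hcompl : ∑ q ∈ Finset.univ.filter (fun q => ¬ p q), (d q - d' q) ^ 2
      ≤ ε * D ^ 2 / 2 := by
    rw [hfilt]
    refine le_trans (le_of_eq (Finset.sum_congr rfl ?_)) hsmall
    intro q hq
    have := (Finset.mem_filter.mp hq).2.2
    rw [this, sub_zero]
  -- bound on S pointwise
  have key : ∀ q ∈ S, (d q - d' q) ^ 2
      ≤ ε * (∑ v', d (q.1, v')) * (∑ u', d (u', q.2)) / 8 + ε ^ 2 * D ^ 2 / 2 ^ 17 := by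
    intro q hq
    have hmem := (Finset.mem_filter.mp hq).2
    have hb := hbound q hmem
    have hnn : 0 ≤ ε * (∑ v', d (q.1, v')) * (∑ u', d (u', q.2)) := by
      apply mul_nonneg
      apply mul_nonneg hε.le
      · exact Finset.sum_nonneg fun _ _ => hd _
      · exact Finset.sum_nonneg fun _ _ => hd _
    have hs := Real.sq_sqrt hnn
    have hsn := Real.sqrt_nonneg (ε * (∑ v', d (q.1, v')) * (∑ u', d (u', q.2)))
    have h1 : (d q - d' q) ^ 2 ≤ (Real.sqrt (ε * (∑ v', d (q.1, v')) * (∑ u', d (u', q.2))) / 4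
        + ε * D / 2 ^ 9) ^ 2 := by
      rw [← sq_abs]
      apply pow_le_pow_left₀ (abs_nonneg _) hb
    nlinarith [sq_nonneg (Real.sqrt (ε * (∑ v', d (q.1, v')) * (∑ u', d (u', q.2))) / 4 - ε * D / 2 ^ 9)]
  have hSsum : ∑ q ∈ S, (d q - d' q) ^ 2
      ≤ ∑ q ∈ S, (ε * (∑ v', d (q.1, v')) * (∑ u', d (u', q.2)) / 8 + ε ^ 2 * D ^ 2 / 2 ^ 17) :=
    Finset.sum_le_sum key
  -- sum of w(u)w(v) over all pairs = D^2
  have hww : ∑ q : σ × σ, (∑ v', d (q.1, v')) * (∑ u', d (u', q.2)) = D ^ 2 := by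
    have hw1 : ∑ x : σ, ∑ v' : σ, d (x, v') = D := by
      rw [hDdef, Fintype.sum_prod_type]
    have hw2 : ∑ y : σ, ∑ u' : σ, d (u', y) = D := by
      rw [hDdef, Fintype.sum_prod_type]; exact Finset.sum_comm
    have hkey : ∑ x : σ, ∑ y : σ, (∑ v', d (x, v')) * (∑ u', d (u', y)) = D ^ 2 := by
      rw [← Finset.sum_mul_sum, hw1, hw2, sq]
    rw [Fintype.sum_prod_type]
    exact hkey
  have hww_le : ∑ q ∈ S, (∑ v', d (q.1, v')) * (∑ u', d (u', q.2)) ≤ D ^ 2 := by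
    rw [← hww]
    apply Finset.sum_le_sum_of_subset_of_nonneg (Finset.subset_univ S)
    intro q _ _
    exact mul_nonneg (Finset.sum_nonneg fun _ _ => hd _) (Finset.sum_nonneg fun _ _ => hd _)
  have hcardterm : (S.card : ℝ) * (ε ^ 2 * D ^ 2 / 2 ^ 17) ≤ 4 / ε * (ε ^ 2 * D ^ 2 / 2 ^ 17) := by
    apply mul_le_mul_of_nonneg_right hcard
    positivity
  have hS2 : ∑ q ∈ S, (d q - d' q) ^ 2 ≤ ε * D ^ 2 / 8 + ε * D ^ 2 / 2 ^ 15 := by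
    refine hSsum.trans ?_
    rw [Finset.sum_add_distrib, Finset.sum_const, nsmul_eq_mul]
    have h1 : ∑ q ∈ S, ε * (∑ v', d (q.1, v')) * (∑ u', d (u', q.2)) / 8
        ≤ ε * D ^ 2 / 8 := by
      have : ∑ q ∈ S, ε * (∑ v', d (q.1, v')) * (∑ u', d (u', q.2)) / 8
          = ε / 8 * ∑ q ∈ S, (∑ v', d (q.1, v')) * (∑ u', d (u', q.2)) := by
        rw [Finset.mul_sum]; apply Finset.sum_congr rfl; intro q _; ring
      rw [this]
      have := mul_le_mul_of_nonneg_left hww_le (by positivity : (0:ℝ) ≤ ε / 8)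
      linarith
    have h2 : 4 / ε * (ε ^ 2 * D ^ 2 / 2 ^ 17) = ε * D ^ 2 / 2 ^ 15 := by
      field_simp; ring
    linarith
  have htot : ∑ q, (d q - d' q) ^ 2 ≤ ε * D ^ 2 / 2 + ε * D ^ 2 / 8 + ε * D ^ 2 / 2 ^ 15 := by
    rw [hsplit]; linarith
  have hεD : 0 ≤ ε * D ^ 2 := by positivity
  constructor
  · refine htot.trans ?_; nlinarith
  · refine htot.trans ?_; nlinarith
end
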